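/- arXiv:2601.12825 — 2 statements merged into one kernel-verified Lean document; each statement's English description precedes it below -/
import Mathlib

section
/- Let n ≥ 1, a ∈ ℂ^n, r > 0, and C ≥ 0. Let φ : B(a, r) → ℝ be continuous and β holomorphic on B(a, r) with β(a) = 0, such that |φ(z) − φ(a) − 2 Re β(z)| ≤ C |z − a|² for all z ∈ B(a, r). Then for every holomorphic function v on B(a, r): ∫_{B(a,r)} |v(z)|² e^{−φ(z)} dλ(z) ≥ σ_{2n} · r^{2n} · |v(a)|² · e^{−φ(a) − C r²}. -/
open MeasureTheory
open scoped ENNReal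

noncomputable instance (n : ℕ) : MeasurableSpace (EuclideanSpace ℂ (Fin n)) := borel _
instance (n : ℕ) : BorelSpace (EuclideanSpace ℂ (Fin n)) := ⟨rfl⟩


open Metric Complex
open scoped Real

section Aux

lemma circle_submean {f : ℂ → ℂ} {R : ℝ} (hR : 1 < R)
    (hf : DifferentiableOn ℂ f (ball 0 R)) :
    ENNReal.ofReal (2 * π) * ENNReal.ofReal (‖f 0‖ ^ 2)
      ≤ ∫⁻ θ in Set.Ioc 0 (2 * π), ENNReal.ofReal (‖f (circleMap 0 1 θ)‖ ^ 2) := by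
  have hsub : closedBall (0:ℂ) 1 ⊆ ball 0 R := closedBall_subset_ball hR
  have hc : ContinuousOn f (closedBall 0 1) := hf.continuousOn.mono hsub
  have hmean : (∫ θ in (0:ℝ)..(2*π), f (circleMap 0 1 θ)) = (2*π) • f 0 := by
    have key := circleIntegral_sub_center_inv_smul_of_differentiable_on_off_countable
      (one_pos) Set.countable_empty hc
      (fun z hz => hf.differentiableAt (isOpen_ball.mem_nhds
        (hsub (ball_subset_closedBall hz.1))))
    rw [circleIntegral] at key
    simp only [deriv_circleMap, sub_zero, one_mul] at key
    have : ∀ θ : ℝ, (circleMap 0 1 θ * I) • ((circleMap 0 1 θ)⁻¹ • f (circleMap 0 1 θ))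
        = I • f (circleMap 0 1 θ) := by
      intro θ
      rw [smul_smul, mul_comm, ← mul_assoc, inv_mul_cancel₀ (by simpa using circleMap_eq_center_iff.not.2 (one_ne_zero) (θ := θ)),
        one_mul]
    simp only [this] at key
    rw [intervalIntegral.integral_smul] at key
    have hI : (I : ℂ) ≠ 0 := I_ne_zero
    have : (2 * ↑π * I : ℂ) • f 0 = I • ((2*π:ℝ) • f 0) := by
      simp [smul_smul, real_smul]
      ring
    rw [this] at key
    exact smul_right_injective ℂ hI key
  have hcm : ∀ θ : ℝ, circleMap 0 1 θ ∈ closedBall (0:ℂ) 1 := fun θ => by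
    simp [mem_closedBall, Complex.dist_eq]
  have hcont : Continuous fun θ : ℝ => f (circleMap 0 1 θ) :=
    hc.comp_continuous (continuous_circleMap 0 1) hcm
  have h2π : (0:ℝ) ≤ 2 * π := by positivity
  have hnorm : 2*π*‖f 0‖ ≤ ∫ θ in Set.Ioc (0:ℝ) (2*π), ‖f (circleMap 0 1 θ)‖ := by
    have := intervalIntegral.norm_integral_le_integral_norm (μ := volume) (f := fun θ : ℝ => f (circleMap 0 1 θ))
      (a := 0) (b := 2*π) h2π
    rw [hmean, intervalIntegral.integral_of_le h2π] at this
    simpa [norm_smul, _root_.abs_of_nonneg h2π, _root_.abs_of_nonneg Real.pi_pos.le] using this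
  set μ := volume.restrict (Set.Ioc (0:ℝ) (2*π)) with hμ
  set g : ℝ → ℝ≥0∞ := fun θ => ENNReal.ofReal ‖f (circleMap 0 1 θ)‖ with hg
  have hgm : AEMeasurable g μ := by
    exact (ENNReal.continuous_ofReal.comp hcont.norm).measurable.aemeasurable
  have hμuniv : μ Set.univ = ENNReal.ofReal (2*π) := by
    simp [hμ, Real.volume_Ioc]
  have h1 : ENNReal.ofReal (2*π*‖f 0‖) ≤ ∫⁻ θ, g θ ∂μ := by
    refine le_trans (ENNReal.ofReal_le_ofReal hnorm) ?_
    exact (ofReal_integral_eq_lintegral_ofReal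
      (hcont.norm.integrableOn_Ioc) (Filter.Eventually.of_forall fun θ => norm_nonneg _)).le
  have hCS := ENNReal.lintegral_mul_le_Lp_mul_Lq μ Real.HolderConjugate.two_two
      hgm (aemeasurable_const (b := (1:ℝ≥0∞)))
  simp only [Pi.mul_apply, mul_one, ENNReal.one_rpow, lintegral_const, hμuniv, one_mul] at hCS
  -- hCS : ∫⁻ g ≤ (∫⁻ g^(2:ℝ))^(1/2) * (ofReal (2π))^(1/2)
  set S := ∫⁻ θ, g θ ^ (2:ℝ) ∂μ with hS
  have hSeq : S = ∫⁻ θ in Set.Ioc (0:ℝ) (2*π), ENNReal.ofReal (‖f (circleMap 0 1 θ)‖ ^ 2) := by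
    have h2 : ∀ x : ℝ≥0∞, x ^ (2:ℝ) = x ^ (2:ℕ) := fun x => by
      rw [← ENNReal.rpow_natCast]; norm_num
    rw [hS, hμ]
    congr 1
    funext θ
    rw [h2, hg, ← ENNReal.ofReal_pow (norm_nonneg _)]
  have hsq : ENNReal.ofReal (2*π*‖f 0‖) ^ 2 ≤ (S ^ (1/(2:ℝ)) * ENNReal.ofReal (2*π) ^ (1/(2:ℝ))) ^ 2 :=
    pow_le_pow_left₀ zero_le (h1.trans hCS) 2
  have hrhs : (S ^ (1/(2:ℝ)) * ENNReal.ofReal (2*π) ^ (1/(2:ℝ))) ^ 2 = S * ENNReal.ofReal (2*π) := by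
    rw [mul_pow, ← ENNReal.rpow_natCast (S ^ (1/(2:ℝ))), ← ENNReal.rpow_natCast (ENNReal.ofReal (2*π) ^ (1/(2:ℝ))),
      ← ENNReal.rpow_mul, ← ENNReal.rpow_mul]
    norm_num
  rw [hrhs] at hsq
  have hlhs : ENNReal.ofReal (2*π*‖f 0‖) ^ 2
      = ENNReal.ofReal (2*π) * ENNReal.ofReal (‖f 0‖^2) * ENNReal.ofReal (2*π) := by
    rw [← ENNReal.ofReal_pow (by positivity), ← ENNReal.ofReal_mul (by positivity),
      ← ENNReal.ofReal_mul (by positivity)]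
    ring_nf
  rw [hlhs] at hsq
  rw [← hSeq]
  exact (ENNReal.mul_le_mul_iff_left (ENNReal.ofReal_pos.mpr (by positivity)).ne'
    ENNReal.ofReal_ne_top).mp hsq

-- rotation about `a` is measure preserving and fixes balls around `a`
section rot
variable {n : ℕ}

noncomputable def rotL (n : ℕ) (θ : ℝ) :
    EuclideanSpace ℂ (Fin n) ≃ₗᵢ[ℝ] EuclideanSpace ℂ (Fin n) :=
  { toLinearEquiv :=
      (LinearEquiv.smulOfNeZero ℂ (EuclideanSpace ℂ (Fin n)) (circleMap 0 1 θ)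
        (by simpa using circleMap_eq_center_iff.not.2 (one_ne_zero) (θ := θ))).restrictScalars ℝ
    norm_map' := fun x => by
      simp [norm_smul] }

lemma rot_measurePreserving (θ : ℝ) (a : EuclideanSpace ℂ (Fin n)) :
    MeasurePreserving (fun z : EuclideanSpace ℂ (Fin n) =>
      a + circleMap 0 1 θ • (z - a)) volume volume := by
  have h1 : (fun z : EuclideanSpace ℂ (Fin n) => a + circleMap 0 1 θ • (z - a))
      = (fun y => y + (a - circleMap 0 1 θ • a)) ∘ (rotL n θ) := by
    funext z
    have hz : rotL n θ z = circleMap 0 1 θ • z := rfl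
    simp only [Function.comp_apply, hz, smul_sub]
    abel
  rw [h1]
  exact (measurePreserving_add_right volume _).comp (rotL n θ).measurePreserving

lemma rot_measurableEmbedding (θ : ℝ) (a : EuclideanSpace ℂ (Fin n)) :
    MeasurableEmbedding (fun z : EuclideanSpace ℂ (Fin n) =>
      a + circleMap 0 1 θ • (z - a)) := by
  have h1 : (fun z : EuclideanSpace ℂ (Fin n) => a + circleMap 0 1 θ • (z - a))
      = (fun y => y + (a - circleMap 0 1 θ • a)) ∘ (rotL n θ) := by
    funext z
    have hz : rotL n θ z = circleMap 0 1 θ • z := rfl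
    simp only [Function.comp_apply, hz, smul_sub]
    abel
  rw [h1]
  exact (MeasurableEquiv.addRight _).measurableEmbedding.comp
    (rotL n θ).toHomeomorph.measurableEmbedding

lemma rot_preimage_ball (θ : ℝ) (a : EuclideanSpace ℂ (Fin n)) (r : ℝ) :
    (fun z : EuclideanSpace ℂ (Fin n) => a + circleMap 0 1 θ • (z - a)) ⁻¹' (ball a r)
      = ball a r := by
  ext z
  simp only [Set.mem_preimage, mem_ball, dist_eq_norm]
  rw [add_sub_cancel_left, norm_smul]
  simp
end rot

lemma submean {n : ℕ} (a : EuclideanSpace ℂ (Fin n)) {r : ℝ} (hr : 0 < r)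
    {u : EuclideanSpace ℂ (Fin n) → ℂ} (hu : DifferentiableOn ℂ u (ball a r)) :
    volume (ball a r) * ENNReal.ofReal (‖u a‖ ^ 2)
      ≤ ∫⁻ z in ball a r, ENNReal.ofReal (‖u z‖ ^ 2) := by
  set B := ball a r with hB
  set F : ℝ → EuclideanSpace ℂ (Fin n) → ℝ≥0∞ :=
    fun θ z => ENNReal.ofReal (‖u (a + circleMap 0 1 θ • (z - a))‖ ^ 2) with hF
  have h2π : (0:ℝ) < 2 * π := by positivity
  -- Step A: rotation invariance
  have stepA : ∀ θ : ℝ, (∫⁻ z in B, F θ z) = ∫⁻ z in B, ENNReal.ofReal (‖u z‖ ^ 2) := by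
    intro θ
    have := (rot_measurePreserving θ a).setLIntegral_comp_preimage_emb
      (rot_measurableEmbedding θ a) (fun z => ENNReal.ofReal (‖u z‖ ^ 2)) B
    rwa [hB, rot_preimage_ball θ a r] at this
  -- Tonelli measurability
  have hm : Continuous (fun p : ℝ × EuclideanSpace ℂ (Fin n) =>
      a + circleMap 0 1 p.1 • (p.2 - a)) :=
    continuous_const.add (((continuous_circleMap 0 1).comp continuous_fst).smul
      (continuous_snd.sub continuous_const))
  have hmaps : ∀ p : ℝ × EuclideanSpace ℂ (Fin n), p ∈ (Set.univ ×ˢ B) →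
      a + circleMap 0 1 p.1 • (p.2 - a) ∈ B := by
    rintro ⟨θ, z⟩ ⟨-, hz⟩
    simp only [hB, mem_ball, dist_eq_norm, add_sub_cancel_left, norm_smul] at *
    simpa using hz
  have haem : AEMeasurable (Function.uncurry F)
      ((volume.restrict (Set.Ioc (0:ℝ) (2*π))).prod (volume.restrict B)) := by
    have hcontOn : ContinuousOn (Function.uncurry F)
        (Set.univ ×ˢ B) := by
      refine ENNReal.continuous_ofReal.comp_continuousOn ?_
      exact ((hu.continuousOn.comp hm.continuousOn hmaps).norm.pow 2)
    have h1 := hcontOn.aemeasurable (μ := volume.prod volume) (MeasurableSet.univ.prod measurableSet_ball)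
    refine h1.mono_measure ?_
    rw [Measure.prod_restrict]
    exact Measure.restrict_mono (Set.prod_mono (Set.subset_univ _) subset_rfl) le_rfl
  -- Step D: pointwise circle bound
  have stepD : ∀ z ∈ B, ENNReal.ofReal (2*π) * ENNReal.ofReal (‖u a‖ ^ 2)
      ≤ ∫⁻ θ in Set.Ioc (0:ℝ) (2*π), F θ z := by
    intro z hz
    set R : ℝ := if ‖z - a‖ = 0 then 2 else r / ‖z - a‖ with hRdef
    have hzr : ‖z - a‖ < r := by simpa [hB, mem_ball, dist_eq_norm] using hz
    have hR : 1 < R := by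
      rw [hRdef]
      split_ifs with h
      · norm_num
      · rw [lt_div_iff₀ (lt_of_le_of_ne (norm_nonneg _) (Ne.symm h))]
        simpa using hzr
    have hmapsf : ∀ w : ℂ, w ∈ ball (0:ℂ) R → a + w • (z - a) ∈ ball a r := by
      intro w hw
      simp only [mem_ball, dist_eq_norm, add_sub_cancel_left, norm_smul] at hw ⊢
      rcases eq_or_ne (‖z - a‖) 0 with h | h
      · simpa [h] using hr
      · have hpos : 0 < ‖z - a‖ := lt_of_le_of_ne (norm_nonneg _) (Ne.symm h)
        calc ‖w‖ * ‖z - a‖ < R * ‖z - a‖ := by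
              exact mul_lt_mul_of_pos_right (by simpa using hw) hpos
          _ = r := by rw [hRdef, if_neg h, div_mul_cancel₀ _ h]
    have hf : DifferentiableOn ℂ (fun w : ℂ => u (a + w • (z - a))) (ball 0 R) := by
      apply DifferentiableOn.comp (t := ball a r) hu
      · exact (differentiable_const _ |>.add (differentiable_id.smul_const _)).differentiableOn
      · exact hmapsf
    have := circle_submean hR hf
    simpa [hF] using this
  -- chain
  have swap := lintegral_lintegral_swap haem
  have stepB : ∫⁻ θ in Set.Ioc (0:ℝ) (2*π), ∫⁻ z in B, F θ z
      = (∫⁻ z in B, ENNReal.ofReal (‖u z‖ ^ 2)) * ENNReal.ofReal (2*π) := by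
    rw [lintegral_congr fun θ => stepA θ]
    rw [setLIntegral_const]
    simp [Real.volume_Ioc]
  have stepE : (∫⁻ z in B, ∫⁻ θ in Set.Ioc (0:ℝ) (2*π), F θ z)
      ≥ (ENNReal.ofReal (2*π) * ENNReal.ofReal (‖u a‖ ^ 2)) * volume B := by
    rw [← setLIntegral_const B]
    exact setLIntegral_mono' measurableSet_ball stepD
  have chain : (ENNReal.ofReal (2*π) * ENNReal.ofReal (‖u a‖ ^ 2)) * volume B
      ≤ (∫⁻ z in B, ENNReal.ofReal (‖u z‖ ^ 2)) * ENNReal.ofReal (2*π) := by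
    rw [← stepB, swap]
    exact stepE
  have chain' : (volume B * ENNReal.ofReal (‖u a‖ ^ 2)) * ENNReal.ofReal (2*π)
      ≤ (∫⁻ z in B, ENNReal.ofReal (‖u z‖ ^ 2)) * ENNReal.ofReal (2*π) := by
    calc (volume B * ENNReal.ofReal (‖u a‖ ^ 2)) * ENNReal.ofReal (2*π)
        = ENNReal.ofReal (2*π) * ENNReal.ofReal (‖u a‖ ^ 2) * volume B := by ring
      _ ≤ _ := chain
  exact (ENNReal.mul_le_mul_iff_left (ENNReal.ofReal_pos.mpr h2π).ne' ENNReal.ofReal_ne_top).mp chain'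

/-- **Weighted lower bound (estimate (Est3)).**
Let `φ : B(a,r) → ℝ` be continuous and `β` holomorphic on `B(a,r) ⊆ ℂ^n` with
`β(a) = 0` and `|φ(z) − φ(a) − 2 Re β(z)| ≤ C|z−a|²` on `B(a,r)`.  Then for every
holomorphic `v` on `B(a,r)`,
`∫_{B(a,r)} |v|² e^{−φ} dλ ≥ σ_{2n} r^{2n} |v(a)|² e^{−φ(a) − C r²}`,
where `σ_{2n}` is the Lebesgue volume of the unit ball of `ℂ^n` and the left-hand
side is allowed to be `+∞`. -/
theorem weighted_submean_value_lower_bound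
    (n : ℕ) (hn : 1 ≤ n) (a : EuclideanSpace ℂ (Fin n)) (r : ℝ) (hr : 0 < r)
    (C : ℝ) (hC : 0 ≤ C)
    (φ : EuclideanSpace ℂ (Fin n) → ℝ) (hφ : ContinuousOn φ (Metric.ball a r))
    (β : EuclideanSpace ℂ (Fin n) → ℂ)
    (hβ : DifferentiableOn ℂ β (Metric.ball a r)) (hβa : β a = 0)
    (htaylor : ∀ z ∈ Metric.ball a r,
      |φ z - φ a - 2 * (β z).re| ≤ C * ‖z - a‖ ^ 2)
    (v : EuclideanSpace ℂ (Fin n) → ℂ)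
    (hv : DifferentiableOn ℂ v (Metric.ball a r)) :
    volume (Metric.ball (0 : EuclideanSpace ℂ (Fin n)) 1) *
        ENNReal.ofReal (r ^ (2 * n)) *
        ENNReal.ofReal (‖v a‖ ^ 2 * Real.exp (-φ a - C * r ^ 2))
      ≤ ∫⁻ z in Metric.ball a r,
          ENNReal.ofReal (‖v z‖ ^ 2 * Real.exp (-φ z)) := by
  haveI : Nontrivial (EuclideanSpace ℂ (Fin n)) := by
    obtain ⟨i⟩ := Fin.pos_iff_nonempty.mp hn
    refine ⟨EuclideanSpace.single i (1:ℂ), 0, fun h => ?_⟩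
    have := congrArg norm h
    simp [EuclideanSpace.norm_single] at this
  set u : EuclideanSpace ℂ (Fin n) → ℂ := fun z => v z * Complex.exp (-(β z)) with hu
  have hud : DifferentiableOn ℂ u (ball a r) := hv.mul (hβ.neg.cexp)
  have hua : u a = v a := by simp [hu, hβa]
  set c : ℝ := -φ a - C * r ^ 2 with hc
  -- finrank
  have hfr : Module.finrank ℝ (EuclideanSpace ℂ (Fin n)) = 2 * n := by
    rw [← Module.finrank_mul_finrank ℝ ℂ (EuclideanSpace ℂ (Fin n)),
      Complex.finrank_real_complex, finrank_euclideanSpace_fin]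
  have hball : volume (ball a r)
      = ENNReal.ofReal (r ^ (2 * n)) * volume (ball (0 : EuclideanSpace ℂ (Fin n)) 1) := by
    rw [Measure.addHaar_ball volume a hr.le, hfr]
  -- pointwise bound
  have hpt : ∀ z ∈ ball a r,
      ENNReal.ofReal (Real.exp c) * ENNReal.ofReal (‖u z‖ ^ 2)
        ≤ ENNReal.ofReal (‖v z‖ ^ 2 * Real.exp (-φ z)) := by
    intro z hz
    rw [← ENNReal.ofReal_mul (Real.exp_nonneg _)]
    apply ENNReal.ofReal_le_ofReal
    have hnu : ‖u z‖ ^ 2 = ‖v z‖ ^ 2 * Real.exp (-(2 * (β z).re)) := by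
      rw [hu]
      simp only [norm_mul, mul_pow, Complex.norm_exp, Complex.neg_re]
      rw [← Real.exp_nat_mul]
      ring_nf
    rw [hnu]
    have key : φ z - φ a - 2 * (β z).re ≤ C * r ^ 2 := by
      refine (le_of_abs_le (htaylor z hz)).trans ?_
      have : ‖z - a‖ ≤ r := by
        have := mem_ball_iff_norm.mp hz
        exact this.le
      exact mul_le_mul_of_nonneg_left (pow_le_pow_left₀ (norm_nonneg _) this 2) hC
    calc Real.exp c * (‖v z‖ ^ 2 * Real.exp (-(2 * (β z).re)))
        = ‖v z‖ ^ 2 * Real.exp (c - 2 * (β z).re) := by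
          rw [show c - 2 * (β z).re = c + -(2 * (β z).re) by ring, Real.exp_add]; ring
      _ ≤ ‖v z‖ ^ 2 * Real.exp (-φ z) := by
          apply mul_le_mul_of_nonneg_left _ (by positivity)
          apply Real.exp_le_exp.mpr
          rw [hc]
          linarith [key]
  -- chain
  calc volume (ball (0 : EuclideanSpace ℂ (Fin n)) 1) * ENNReal.ofReal (r ^ (2 * n)) *
        ENNReal.ofReal (‖v a‖ ^ 2 * Real.exp c)
      = (volume (ball a r) * ENNReal.ofReal (‖u a‖ ^ 2)) * ENNReal.ofReal (Real.exp c) := by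
        rw [hball, hua, ENNReal.ofReal_mul (by positivity)]
        ring
    _ ≤ (∫⁻ z in ball a r, ENNReal.ofReal (‖u z‖ ^ 2)) * ENNReal.ofReal (Real.exp c) :=
        mul_le_mul_left (submean a hr hud) _
    _ = ∫⁻ z in ball a r, ENNReal.ofReal (Real.exp c) * ENNReal.ofReal (‖u z‖ ^ 2) := by
        rw [lintegral_const_mul' _ _ ENNReal.ofReal_ne_top]; ring
    _ ≤ ∫⁻ z in ball a r, ENNReal.ofReal (‖v z‖ ^ 2 * Real.exp (-φ z)) :=
        setLIntegral_mono' measurableSet_ball hpt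
end Aux
end

section
/- Let n ≥ 1 and let g be a holomorphic function on an open subset of ℂ^n containing the closed unit ball. Then there exists a constant C > 0 such that for every r ∈ (0, 1]: | (1/(σ_{2n} r^{2n})) ∫_{{z : |z| < r}} |g(z)|² dλ(z) − |g(0)|² | ≤ C r². -/
open MeasureTheory Metric Complex
open scoped ENNReal

lemma setIntegral_clm_ball_zero {n : ℕ} (L : EuclideanSpace ℂ (Fin n) →L[ℝ] ℝ) (r : ℝ) :
    ∫ x in Metric.ball (0 : EuclideanSpace ℂ (Fin n)) r, L x = 0 := by
  set s := Metric.ball (0 : EuclideanSpace ℂ (Fin n)) r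
  have hmeas : MeasurableSet s := Metric.isOpen_ball.measurableSet
  have h1 : ∫ x in s, L x ∂(volume) = ∫ x, Set.indicator s (fun y => L y) x :=
    (integral_indicator hmeas).symm
  have h2 : ∫ x, Set.indicator s (fun y => L y) x
      = ∫ x, Set.indicator s (fun y => L y) (-x) := (integral_neg_eq_self _ _).symm
  have h3 : ∀ x, Set.indicator s (fun y => L y) (-x) = - Set.indicator s (fun y => L y) x := by
    intro x
    have hs : (-x ∈ s) ↔ (x ∈ s) := by
      simp [s, Metric.mem_ball, dist_eq_norm]
    by_cases hx : x ∈ s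
    · rw [Set.indicator_of_mem (hs.mpr hx), Set.indicator_of_mem hx, map_neg]
    · rw [Set.indicator_of_notMem (fun h => hx (hs.mp h)), Set.indicator_of_notMem hx, neg_zero]
  have h4 : ∫ x in s, L x = - ∫ x in s, L x := by
    conv_lhs => rw [h1, h2]
    simp only [h3]
    rw [integral_neg, ← h1]
  linarith

-- real part deriv helper
lemma hasDerivAt_re' {u : ℝ → ℂ} {u' : ℂ} {t : ℝ} (h : HasDerivAt u u' t) :
    HasDerivAt (fun s => (u s).re) u'.re t := by
  simpa [Function.comp_def] using (Complex.reCLM.hasFDerivAt.comp_hasDerivAt t h)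

lemma hasDerivAt_im' {u : ℝ → ℂ} {u' : ℂ} {t : ℝ} (h : HasDerivAt u u' t) :
    HasDerivAt (fun s => (u s).im) u'.im t := by
  simpa [Function.comp_def] using (Complex.imCLM.hasFDerivAt.comp_hasDerivAt t h)

lemma quad_remainder {E : Type*} [NormedAddCommGroup E] [NormedSpace ℂ E]
    (g : E → ℂ) (U : Set E) (hg : ∀ x ∈ U, DifferentiableAt ℂ g x)
    (ε M : ℝ) (hε : 0 < ε) (hM : 0 < M)
    (hsub : closedBall (0 : E) (1 + 2*ε) ⊆ U)
    (hMg : ∀ x ∈ closedBall (0 : E) (1 + 2*ε), ‖g x‖ ≤ M)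
    (L : E →L[ℝ] ℝ) (hL : HasFDerivAt (fun w => Complex.normSq (g w)) L 0)
    (z : E) (hz : ‖z‖ ≤ 1) :
    |Complex.normSq (g z) - Complex.normSq (g 0) - L z| ≤ (8 * M^2 / ε^2) * ‖z‖^2 := by
  have hK : 0 < 8 * M ^ 2 / ε ^ 2 := by positivity
  rcases eq_or_ne z 0 with rfl | hz0
  · simp
  have hzpos : 0 < ‖z‖ := norm_pos_iff.mpr hz0
  set ρ : ℝ := ε / ‖z‖ with hρ
  have hρpos : 0 < ρ := by positivity
  set G : ℂ → ℂ := fun τ => g (τ • z) with hG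
  -- differentiability of G
  have hGdiff : ∀ τ : ℂ, ‖τ • z‖ ≤ 1 + 2*ε → DifferentiableAt ℂ G τ := by
    intro τ hτ
    have hmem : τ • z ∈ U := hsub (by simpa [mem_closedBall, dist_eq_norm] using hτ)
    exact (hg _ hmem).comp τ ((differentiableAt_id).smul_const z)
  -- bound for deriv G
  have bound1 : ∀ σ : ℂ, ‖σ • z‖ ≤ 1 + ε → ‖deriv G σ‖ ≤ M * ‖z‖ / ε := by
    intro σ hσ
    have h1 : ‖deriv G σ‖ ≤ M / ρ := by
      apply Complex.norm_deriv_le_of_forall_mem_sphere_norm_le hρpos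
      · apply DifferentiableOn.diffContOnCl
        rw [closure_ball σ hρpos.ne']
        intro w hw
        apply (hGdiff w ?_).differentiableWithinAt
        have : ‖w • z‖ ≤ ‖σ • z‖ + ‖(w - σ) • z‖ := by
          have : w • z = σ • z + (w - σ) • z := by rw [sub_smul]; abel
          rw [this]; exact norm_add_le _ _
        have h2 : ‖(w - σ) • z‖ ≤ ρ * ‖z‖ := by
          rw [norm_smul]
          exact mul_le_mul_of_nonneg_right (by simpa [mem_closedBall, dist_eq_norm] using hw)
            (norm_nonneg z)
        have h3 : ρ * ‖z‖ = ε := by rw [hρ]; field_simp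
        linarith
      · intro w hw
        apply hMg
        simp only [mem_closedBall, dist_eq_norm, sub_zero]
        have : ‖w • z‖ ≤ ‖σ • z‖ + ‖(w - σ) • z‖ := by
          have : w • z = σ • z + (w - σ) • z := by rw [sub_smul]; abel
          rw [this]; exact norm_add_le _ _
        have h2 : ‖(w - σ) • z‖ = ε := by
          rw [norm_smul]
          have : ‖w - σ‖ = ρ := by simpa [mem_sphere_iff_norm] using hw
          rw [this, hρ]; field_simp
        linarith
    calc ‖deriv G σ‖ ≤ M / ρ := h1
      _ = M * ‖z‖ / ε := by rw [hρ]; field_simp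
  -- analyticity of G on a large ball
  set R0 : ℝ := (1 + 2*ε) / ‖z‖ with hR0
  have hR0pos : 0 < R0 := by positivity
  have hGan : AnalyticOnNhd ℂ G (ball (0:ℂ) R0) := by
    apply DifferentiableOn.analyticOnNhd _ isOpen_ball
    intro w hw
    apply (hGdiff w ?_).differentiableWithinAt
    rw [norm_smul]
    have hw' : ‖w‖ < R0 := by simpa [mem_ball, dist_eq_norm] using hw
    calc ‖w‖ * ‖z‖ ≤ R0 * ‖z‖ := mul_le_mul_of_nonneg_right hw'.le (norm_nonneg z)
      _ = 1 + 2*ε := by rw [hR0]; field_simp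
  have hG'diff : DifferentiableOn ℂ (deriv G) (ball (0:ℂ) R0) :=
    hGan.deriv.differentiableOn
  -- bound for second derivative
  have bound2 : ∀ σ : ℂ, ‖σ • z‖ ≤ 1 → ‖deriv (deriv G) σ‖ ≤ M * ‖z‖^2 / ε^2 := by
    intro σ hσ
    have hσn : ‖σ‖ * ‖z‖ ≤ 1 := by rwa [norm_smul] at hσ
    have h1 : ‖deriv (deriv G) σ‖ ≤ (M * ‖z‖ / ε) / ρ := by
      apply Complex.norm_deriv_le_of_forall_mem_sphere_norm_le hρpos
      · apply DifferentiableOn.diffContOnCl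
        rw [closure_ball σ hρpos.ne']
        apply hG'diff.mono
        intro w hw
        simp only [mem_ball, dist_eq_norm, sub_zero]
        have h2 : ‖w - σ‖ ≤ ρ := by simpa [mem_closedBall, dist_eq_norm] using hw
        have h3 : ‖σ‖ ≤ 1 / ‖z‖ := by
          rw [le_div_iff₀ hzpos]; exact hσn
        calc ‖w‖ ≤ ‖σ‖ + ‖w - σ‖ := by
              simpa using norm_add_le σ (w - σ)
          _ ≤ 1 / ‖z‖ + ρ := add_le_add h3 h2
          _ < R0 := by
              rw [hρ, hR0, ← add_div, div_lt_div_iff₀ hzpos hzpos]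
              nlinarith [hzpos]
      · intro w hw
        apply bound1
        rw [norm_smul]
        have h2 : ‖w - σ‖ = ρ := by simpa [mem_sphere_iff_norm] using hw
        have : ‖w‖ ≤ ‖σ‖ + ρ := by
          rw [← h2]; simpa using norm_add_le σ (w - σ)
        calc ‖w‖ * ‖z‖ ≤ (‖σ‖ + ρ) * ‖z‖ := mul_le_mul_of_nonneg_right this (norm_nonneg z)
          _ = ‖σ‖ * ‖z‖ + ε := by rw [add_mul, hρ]; field_simp
          _ ≤ 1 + ε := by linarith
    calc ‖deriv (deriv G) σ‖ ≤ (M * ‖z‖ / ε) / ρ := h1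
      _ = M * ‖z‖^2 / ε^2 := by rw [hρ]; field_simp
  -- real-variable functions along the segment
  set c1 : ℝ → ℂ := fun t => deriv G ↑t with hc1def
  set c2 : ℝ → ℂ := fun t => deriv (deriv G) ↑t with hc2def
  have memball : ∀ t : ℝ, t ∈ Set.Icc (0:ℝ) 1 → ‖(↑t : ℂ) • z‖ ≤ 1 := by
    intro t ht
    rw [norm_smul, Complex.norm_real]
    have : |t| ≤ 1 := abs_le.mpr ⟨by linarith [ht.1], ht.2⟩
    calc ‖t‖ * ‖z‖ ≤ 1 * 1 := by
          apply mul_le_mul _ hz (norm_nonneg z) zero_le_one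
          simpa [Real.norm_eq_abs] using this
      _ = 1 := by ring
  have hu : ∀ t ∈ Set.Icc (0:ℝ) 1, HasDerivAt (fun s : ℝ => G ↑s) (c1 t) t := by
    intro t ht
    exact ((hGdiff _ ((memball t ht).trans (by linarith))).hasDerivAt).comp_ofReal
  have hc1 : ∀ t ∈ Set.Icc (0:ℝ) 1, HasDerivAt (fun s : ℝ => deriv G ↑s) (c2 t) t := by
    intro t ht
    have hmem : (↑t : ℂ) ∈ ball (0:ℂ) R0 := by
      simp only [mem_ball, dist_zero_right, Complex.norm_real]
      have h1 : ‖t‖ * ‖z‖ ≤ 1 := by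
        have := memball t ht; rwa [norm_smul, Complex.norm_real] at this
      rw [hR0, lt_div_iff₀ hzpos]
      nlinarith [norm_nonneg (t:ℂ), hzpos]
    exact ((hGan.deriv t hmem).differentiableAt.hasDerivAt).comp_ofReal
  set h : ℝ → ℝ := fun t => (G ↑t).re * (G ↑t).re + (G ↑t).im * (G ↑t).im with hhdef
  set p : ℝ → ℝ := fun t =>
    ((c1 t).re * (G ↑t).re + (G ↑t).re * (c1 t).re)
      + ((c1 t).im * (G ↑t).im + (G ↑t).im * (c1 t).im) with hpdef
  set q : ℝ → ℝ := fun t =>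
    (((c2 t).re * (G ↑t).re + (c1 t).re * (c1 t).re)
        + ((c1 t).re * (c1 t).re + (G ↑t).re * (c2 t).re))
      + (((c2 t).im * (G ↑t).im + (c1 t).im * (c1 t).im)
        + ((c1 t).im * (c1 t).im + (G ↑t).im * (c2 t).im)) with hqdef
  have hp : ∀ t ∈ Set.Icc (0:ℝ) 1, HasDerivAt h (p t) t := by
    intro t ht
    exact ((hasDerivAt_re' (hu t ht)).mul (hasDerivAt_re' (hu t ht))).add
      ((hasDerivAt_im' (hu t ht)).mul (hasDerivAt_im' (hu t ht)))
  have hq : ∀ t ∈ Set.Icc (0:ℝ) 1, HasDerivAt p (q t) t := by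
    intro t ht
    exact (((hasDerivAt_re' (hc1 t ht)).mul (hasDerivAt_re' (hu t ht))).add
      ((hasDerivAt_re' (hu t ht)).mul (hasDerivAt_re' (hc1 t ht)))).add
      ((((hasDerivAt_im' (hc1 t ht)).mul (hasDerivAt_im' (hu t ht)))).add
      ((hasDerivAt_im' (hu t ht)).mul (hasDerivAt_im' (hc1 t ht))))
  -- bound on q
  have hqbound : ∀ t ∈ Set.Icc (0:ℝ) 1, |q t| ≤ (8 * M^2 / ε^2) * ‖z‖^2 := by
    intro t ht
    have ha : ‖G ↑t‖ ≤ M := by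
      apply hMg
      simp only [mem_closedBall, dist_eq_norm, sub_zero]
      exact (memball t ht).trans (by linarith)
    have hb : ‖c1 t‖ ≤ M * ‖z‖ / ε := bound1 _ ((memball t ht).trans (by linarith))
    have hc : ‖c2 t‖ ≤ M * ‖z‖^2 / ε^2 := bound2 _ (memball t ht)
    have e1 : |(G ↑t).re| ≤ M := (Complex.abs_re_le_norm _).trans ha
    have e2 : |(G ↑t).im| ≤ M := (Complex.abs_im_le_norm _).trans ha
    have e3 : |(c1 t).re| ≤ M * ‖z‖ / ε := (Complex.abs_re_le_norm _).trans hb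
    have e4 : |(c1 t).im| ≤ M * ‖z‖ / ε := (Complex.abs_im_le_norm _).trans hb
    have e5 : |(c2 t).re| ≤ M * ‖z‖^2 / ε^2 := (Complex.abs_re_le_norm _).trans hc
    have e6 : |(c2 t).im| ≤ M * ‖z‖^2 / ε^2 := (Complex.abs_im_le_norm _).trans hc
    have bnd : ∀ (u v bu bv : ℝ), |u| ≤ bu → |v| ≤ bv → |u * v| ≤ bu * bv := by
      intro u v bu bv h1 h2
      rw [abs_mul]
      exact mul_le_mul h1 h2 (abs_nonneg _) ((abs_nonneg u).trans h1)
    set D : ℝ := M^2 * ‖z‖^2 / ε^2 with hDdef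
    have T1 : |(c2 t).re * (G ↑t).re| ≤ D := le_of_le_of_eq (bnd _ _ _ _ e5 e1) (by rw [hDdef]; ring)
    have T2 : |(c1 t).re * (c1 t).re| ≤ D := le_of_le_of_eq (bnd _ _ _ _ e3 e3) (by rw [hDdef]; field_simp)
    have T3 : |(G ↑t).re * (c2 t).re| ≤ D := le_of_le_of_eq (bnd _ _ _ _ e1 e5) (by rw [hDdef]; ring)
    have T4 : |(c2 t).im * (G ↑t).im| ≤ D := le_of_le_of_eq (bnd _ _ _ _ e6 e2) (by rw [hDdef]; ring)
    have T5 : |(c1 t).im * (c1 t).im| ≤ D := le_of_le_of_eq (bnd _ _ _ _ e4 e4) (by rw [hDdef]; field_simp)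
    have T6 : |(G ↑t).im * (c2 t).im| ≤ D := le_of_le_of_eq (bnd _ _ _ _ e2 e6) (by rw [hDdef]; ring)
    have habs : |q t| ≤ 8 * D := by
      rw [hqdef]
      refine le_trans (abs_add_le _ _) ?_
      have A1 := (abs_add_le ((c2 t).re * (G ↑t).re + (c1 t).re * (c1 t).re)
        ((c1 t).re * (c1 t).re + (G ↑t).re * (c2 t).re))
      have A2 := (abs_add_le ((c2 t).im * (G ↑t).im + (c1 t).im * (c1 t).im)
        ((c1 t).im * (c1 t).im + (G ↑t).im * (c2 t).im))
      have B1 := abs_add_le ((c2 t).re * (G ↑t).re) ((c1 t).re * (c1 t).re)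
      have B2 := abs_add_le ((c1 t).re * (c1 t).re) ((G ↑t).re * (c2 t).re)
      have B3 := abs_add_le ((c2 t).im * (G ↑t).im) ((c1 t).im * (c1 t).im)
      have B4 := abs_add_le ((c1 t).im * (c1 t).im) ((G ↑t).im * (c2 t).im)
      linarith
    calc |q t| ≤ 8 * D := habs
      _ = (8 * M^2 / ε^2) * ‖z‖^2 := by rw [hDdef]; ring
  -- mean value, step 1
  have step1 : ∀ t ∈ Set.Icc (0:ℝ) 1, |p t - p 0| ≤ (8 * M^2 / ε^2) * ‖z‖^2 := by
    intro t ht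
    have := Convex.norm_image_sub_le_of_norm_hasDerivWithin_le
      (f := p) (f' := q) (s := Set.Icc (0:ℝ) 1) (C := (8 * M^2 / ε^2) * ‖z‖^2)
      (fun x hx => (hq x hx).hasDerivWithinAt)
      (fun x hx => by simpa [Real.norm_eq_abs] using hqbound x hx)
      (convex_Icc 0 1) (Set.mem_Icc.mpr ⟨le_refl 0, zero_le_one⟩) ht
    rw [Real.norm_eq_abs, Real.norm_eq_abs, sub_zero] at this
    calc |p t - p 0| ≤ (8 * M^2 / ε^2) * ‖z‖^2 * |t| := this
      _ ≤ (8 * M^2 / ε^2) * ‖z‖^2 * 1 := by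
          apply mul_le_mul_of_nonneg_left _ (by positivity)
          exact abs_le.mpr ⟨by linarith [ht.1], ht.2⟩
      _ = (8 * M^2 / ε^2) * ‖z‖^2 := mul_one _
  -- mean value, step 2
  have step2 : |h 1 - h 0 - p 0| ≤ (8 * M^2 / ε^2) * ‖z‖^2 := by
    have := Convex.norm_image_sub_le_of_norm_hasDerivWithin_le
      (f := fun t => h t - t * p 0) (f' := fun t => p t - p 0) (s := Set.Icc (0:ℝ) 1)
      (C := (8 * M^2 / ε^2) * ‖z‖^2)
      (fun x hx => ((hp x hx).sub (hasDerivAt_mul_const (p 0))).hasDerivWithinAt)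
      (fun x hx => by simpa [Real.norm_eq_abs] using step1 x hx)
      (convex_Icc 0 1) (Set.mem_Icc.mpr ⟨le_refl 0, zero_le_one⟩)
      (Set.mem_Icc.mpr ⟨zero_le_one, le_refl 1⟩)
    simp only [Real.norm_eq_abs] at this
    calc |h 1 - h 0 - p 0| = |(h 1 - 1 * p 0) - (h 0 - 0 * p 0)| := by ring_nf
      _ ≤ (8 * M^2 / ε^2) * ‖z‖^2 * |(1:ℝ) - 0| := this
      _ = (8 * M^2 / ε^2) * ‖z‖^2 := by norm_num
  -- identify h with normSq ∘ g ∘ (t ↦ t • z)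
  have hfun : h = fun t : ℝ => Complex.normSq (g (t • z)) := by
    funext t
    have : (↑t : ℂ) • z = t • z := rfl
    rw [hhdef]
    simp only [hG, this, Complex.normSq_apply]
  have h1eq : h 1 = Complex.normSq (g z) := by rw [hfun]; simp
  have h0eq : h 0 = Complex.normSq (g 0) := by rw [hfun]; simp
  have hp0 : p 0 = L z := by
    have hsmul : HasDerivAt (fun t : ℝ => t • z) z 0 := by
      simpa using (hasDerivAt_id (0:ℝ)).smul_const z
    have hL0 : HasFDerivAt (fun w => Complex.normSq (g w)) L ((0:ℝ) • z) := by
      rwa [zero_smul]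
    have hd2 : HasDerivAt (fun t : ℝ => Complex.normSq (g (t • z))) (L z) 0 := by
      simpa [Function.comp_def] using hL0.comp_hasDerivAt 0 hsmul
    have hd1 : HasDerivAt (fun t : ℝ => Complex.normSq (g (t • z))) (p 0) 0 := by
      rw [← hfun]
      exact hp 0 (Set.mem_Icc.mpr ⟨le_refl 0, zero_le_one⟩)
    exact hd1.unique hd2
  rw [← h1eq, ← h0eq, ← hp0]
  exact step2

/-- **Second-order expansion of ball averages of `|g|²` (estimate (Est4)).**
If `g` is holomorphic on an open subset of `ℂ^n` containing the closed unit ball,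
then there is `C > 0` such that for every `r ∈ (0, 1]`,
`| (1/(σ_{2n} r^{2n})) ∫_{|z|<r} |g|² dλ − |g(0)|² | ≤ C r²`, where `σ_{2n}` is the
Lebesgue volume of the unit ball of `ℂ^n`. -/
theorem ball_average_sq_norm_second_order
    (n : ℕ) (hn : 1 ≤ n) (U : Set (EuclideanSpace ℂ (Fin n))) (hU : IsOpen U)
    (hUball : Metric.closedBall (0 : EuclideanSpace ℂ (Fin n)) 1 ⊆ U)
    (g : EuclideanSpace ℂ (Fin n) → ℂ)
    (hg : ∀ x ∈ U, DifferentiableAt ℂ g x) :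
    ∃ C > (0 : ℝ), ∀ r ∈ Set.Ioc (0 : ℝ) 1,
      |((volume (Metric.ball (0 : EuclideanSpace ℂ (Fin n)) 1)).toReal * r ^ (2 * n))⁻¹ *
            (∫ z in Metric.ball (0 : EuclideanSpace ℂ (Fin n)) r, ‖g z‖ ^ 2) -
          ‖g 0‖ ^ 2|
        ≤ C * r ^ 2 := by
  haveI : Nonempty (Fin n) := Fin.pos_iff_nonempty.mp hn
  haveI : Nontrivial (EuclideanSpace ℂ (Fin n)) := inferInstance
  set f : EuclideanSpace ℂ (Fin n) → ℝ := fun w => Complex.normSq (g w) with hfdef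
  -- thicken the closed ball inside U
  obtain ⟨δ, hδpos, hδsub⟩ :=
    (isCompact_closedBall (0 : EuclideanSpace ℂ (Fin n)) 1).exists_cthickening_subset_open hU hUball
  rw [cthickening_closedBall hδpos.le zero_le_one] at hδsub
  set ε : ℝ := δ / 2 with hεdef
  have hεpos : 0 < ε := by positivity
  have hsub : closedBall (0 : EuclideanSpace ℂ (Fin n)) (1 + 2*ε) ⊆ U := by
    have : (1:ℝ) + 2*ε = δ + 1 := by rw [hεdef]; ring
    rwa [this]
  -- continuity of g on the thickened ball
  have hgc : ContinuousOn g (closedBall (0 : EuclideanSpace ℂ (Fin n)) (1 + 2*ε)) := fun x hx =>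
    ((hg x (hsub hx)).continuousAt).continuousWithinAt
  obtain ⟨M₀, hM₀⟩ := (isCompact_closedBall (0 : EuclideanSpace ℂ (Fin n)) (1+2*ε)).exists_bound_of_continuousOn hgc
  set M : ℝ := max M₀ 1 with hMdef
  have hM : 0 < M := lt_of_lt_of_le one_pos (le_max_right _ _)
  have hMg : ∀ x ∈ closedBall (0 : EuclideanSpace ℂ (Fin n)) (1+2*ε), ‖g x‖ ≤ M := fun x hx =>
    (hM₀ x hx).trans (le_max_left _ _)
  -- differentiability of f at 0
  have h0U : (0 : EuclideanSpace ℂ (Fin n)) ∈ U := hUball (mem_closedBall_self zero_le_one)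
  have hgR : DifferentiableAt ℝ g 0 := (hg 0 h0U).restrictScalars ℝ
  have hre : DifferentiableAt ℝ (fun w : EuclideanSpace ℂ (Fin n) => (g w).re) 0 :=
    Complex.reCLM.differentiableAt.comp 0 hgR
  have him : DifferentiableAt ℝ (fun w : EuclideanSpace ℂ (Fin n) => (g w).im) 0 :=
    Complex.imCLM.differentiableAt.comp 0 hgR
  have hfd : DifferentiableAt ℝ f 0 := by
    have : f = fun w : EuclideanSpace ℂ (Fin n) => (g w).re * (g w).re + (g w).im * (g w).im := by
      funext w; rw [hfdef]; simp [Complex.normSq_apply]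
    rw [this]
    exact (hre.mul hre).add (him.mul him)
  set L : EuclideanSpace ℂ (Fin n) →L[ℝ] ℝ := fderiv ℝ f 0 with hLdef
  have hL : HasFDerivAt f L 0 := hfd.hasFDerivAt
  set K : ℝ := 8 * M^2 / ε^2 with hKdef
  have hKpos : 0 < K := by positivity
  have key : ∀ z : EuclideanSpace ℂ (Fin n), ‖z‖ ≤ 1 → |f z - f 0 - L z| ≤ K * ‖z‖^2 := fun z hz =>
    quad_remainder g U hg ε M hεpos hM hsub hMg L hL z hz
  -- volume facts
  set A : ℝ := (volume (Metric.ball (0 : EuclideanSpace ℂ (Fin n)) 1)).toReal with hAdef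
  have hApos : 0 < A := ENNReal.toReal_pos
    (Metric.measure_ball_pos _ _ one_pos).ne' measure_ball_lt_top.ne
  have hfr : Module.finrank ℝ (EuclideanSpace ℂ (Fin n)) = 2 * n := by
    have h1 : Module.finrank ℝ (EuclideanSpace ℂ (Fin n))
        = Module.finrank ℝ ℂ * Module.finrank ℂ (EuclideanSpace ℂ (Fin n)) :=
      (Module.finrank_mul_finrank ℝ ℂ _).symm
    rw [h1, finrank_euclideanSpace, Complex.finrank_real_complex, Fintype.card_fin]
  refine ⟨K, hKpos, ?_⟩
  rintro r ⟨hr0, hr1⟩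
  set s := Metric.ball (0 : EuclideanSpace ℂ (Fin n)) r with hsdef
  have hvol : (volume s).toReal = r ^ (2*n) * A := by
    rw [hsdef, Measure.addHaar_ball _ _ hr0.le, ENNReal.toReal_mul,
      ENNReal.toReal_ofReal (by positivity), hfr, hAdef]
  -- integrability
  have hsU : closedBall (0 : EuclideanSpace ℂ (Fin n)) r ⊆ closedBall (0 : EuclideanSpace ℂ (Fin n)) (1+2*ε) := by
    apply closedBall_subset_closedBall
    linarith
  have hfc : ContinuousOn f (closedBall (0 : EuclideanSpace ℂ (Fin n)) r) :=
    Complex.continuous_normSq.comp_continuousOn (hgc.mono hsU)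
  have hfi : IntegrableOn f s :=
    (hfc.integrableOn_compact (isCompact_closedBall _ _)).mono_set ball_subset_closedBall
  have hci : IntegrableOn (fun _ : EuclideanSpace ℂ (Fin n) => f 0) s :=
    integrableOn_const measure_ball_lt_top.ne
  have hLi : IntegrableOn (fun z => L z) s :=
    (L.continuous.continuousOn.integrableOn_compact
      (isCompact_closedBall (0 : EuclideanSpace ℂ (Fin n)) r)).mono_set ball_subset_closedBall
  have hresti : IntegrableOn (fun z => f z - f 0 - L z) s := (hfi.sub hci).sub hLi
  have hL0 : ∫ z in s, L z = 0 := setIntegral_clm_ball_zero L r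
  have e1 : ∫ z in s, (f z - f 0 - L z)
      = (∫ z in s, f z) - (volume s).toReal * f 0 := by
    have e1a := integral_sub (hfi.sub hci) hLi
    have e1b := integral_sub hfi hci
    simp only [Pi.sub_apply, setIntegral_const, smul_eq_mul, measureReal_def] at e1a e1b
    rw [e1a, e1b, hL0]
    ring
  set R : ℝ := ∫ z in s, (f z - f 0 - L z) with hRdef
  have hR : |R| ≤ K * r^2 * (volume s).toReal := by
    rw [hRdef, ← Real.norm_eq_abs]
    apply norm_setIntegral_le_of_norm_le_const measure_ball_lt_top
    · intro z hz
      have hzr : ‖z‖ < r := by simpa [hsdef, mem_ball, dist_eq_norm] using hz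
      have hz1 : ‖z‖ ≤ 1 := le_trans hzr.le hr1
      calc ‖f z - f 0 - L z‖ = |f z - f 0 - L z| := Real.norm_eq_abs _
        _ ≤ K * ‖z‖^2 := key z hz1
        _ ≤ K * r^2 := by
            apply mul_le_mul_of_nonneg_left _ hKpos.le
            exact pow_le_pow_left₀ (norm_nonneg z) hzr.le 2
  -- rewrite the integrand
  have hint : (∫ z in s, ‖g z‖ ^ 2) = ∫ z in s, f z := by
    apply setIntegral_congr_fun (Metric.isOpen_ball.measurableSet)
    intro z _
    rw [hfdef]
    simp [← Complex.sq_norm]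
  have hg0 : ‖g 0‖ ^ 2 = f 0 := by
    rw [hfdef]; simp [← Complex.sq_norm]
  set B : ℝ := A * r ^ (2*n) with hBdef
  have hBpos : 0 < B := by positivity
  have hvol' : (volume s).toReal = B := by rw [hBdef, hvol]; ring
  have hIval : (∫ z in s, f z) = B * f 0 + R := by
    rw [e1, hvol']
    ring
  rw [hint, hg0, hIval]
  have : B⁻¹ * (B * f 0 + R) - f 0 = B⁻¹ * R := by field_simp; ring
  rw [this, abs_mul, abs_of_pos (inv_pos.mpr hBpos)]
  calc B⁻¹ * |R| ≤ B⁻¹ * (K * r^2 * B) := by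
        apply mul_le_mul_of_nonneg_left _ (inv_pos.mpr hBpos).le
        rw [hvol'] at hR
        exact hR
      _ = K * r^2 := by field_simp
end
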